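/- Under the hypotheses of the Δ-rotation lemma, for every point p ∈ P the pointwise bound dist(p, F')² ≤ (1 + Δ/δ)·dist(p, F)² + (Δ/δ + (Δ/δ)²)·(δ/h · u_p)² holds, where δ = δ_{P,F} = √((1/|P|)Σ_{q∈P} dist(q,F)²), u_p = |<p - o, (Proj(u)-o)/||Proj(u)-o||>|, and h² = (1/|P|)Σ_{q∈P} u_q². -/

import Mathlib

open Finset Metric
open scoped RealInnerProductSpace

private lemma delta_rotation_alg_aux (A B D Δ δ h : ℝ) (hA : 0 ≤ A) (hB : 0 ≤ B)
    (hD : 0 ≤ D) (hΔ : 0 < Δ) (hδ : 0 < δ) (hh : 0 < h)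
    (hmain : D ≤ A + B * (Δ / h)) :
    D ^ 2 ≤ (1 + Δ / δ) * A ^ 2 + (Δ / δ + (Δ / δ) ^ 2) * ((δ / h) * B) ^ 2 := by
  have hδne : δ ≠ 0 := ne_of_gt hδ
  have hhne : h ≠ 0 := ne_of_gt hh
  have hstep : D ^ 2 ≤ (A + B * (Δ / h)) ^ 2 := by
    apply pow_le_pow_left₀ hD hmain
  refine hstep.trans ?_
  have hident : (1 + Δ / δ) * A ^ 2 + (Δ / δ + (Δ / δ) ^ 2) * ((δ / h) * B) ^ 2
      - (A + B * (Δ / h)) ^ 2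
      = (Δ / (δ * h ^ 2)) * (h * A - δ * B) ^ 2 := by
    field_simp
    ring
  nlinarith [mul_nonneg (le_of_lt (div_pos hΔ (mul_pos hδ (pow_pos hh 2))))
      (sq_nonneg (h * A - δ * B))]

set_option maxHeartbeats 1000000 in
/-- Pointwise bound in the Δ-rotation lemma: in the Δ-rotation setting, for
every `p ∈ P`,
`dist(p,F')² ≤ (1 + Δ/δ)·dist(p,F)² + (Δ/δ + (Δ/δ)²)·(δ/h · u_p)²`,
where `δ² = (1/|P|)Σ dist(q,F)²`, `u_p = |⟪p-o,(pu-o)/‖pu-o‖⟫|` and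
`h² = (1/|P|)Σ u_q²`. -/
theorem delta_rotation_pointwise_bound (d j : ℕ)
    (P : Finset (EuclideanSpace ℝ (Fin d))) (hP : P.Nonempty)
    (F : AffineSubspace ℝ (EuclideanSpace ℝ (Fin d)))
    (hFdim : Module.finrank ℝ F.direction = j)
    (o : EuclideanSpace ℝ (Fin d)) (ho : o ∈ F)
    (u pu : EuclideanSpace ℝ (Fin d)) (hpu : pu ∈ F)
    (hproj : ∀ v ∈ F.direction, ⟪u - pu, v⟫ = 0)
    (hne : pu ≠ o)
    (Δ : ℝ) (hΔ : 0 < Δ) (h δ : ℝ)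
    (hh : h = Real.sqrt ((∑ q ∈ P, |⟪q - o, ‖pu - o‖⁻¹ • (pu - o)⟫| ^ 2) / P.card))
    (hhpos : 0 < h)
    (hδ : δ = Real.sqrt ((∑ q ∈ P, infDist q (F : Set (EuclideanSpace ℝ (Fin d))) ^ 2) / P.card))
    (hδpos : 0 < δ)
    (htan : Real.tan (InnerProductGeometry.angle (u - o) (pu - o)) ≤ Δ / h)
    (F' : AffineSubspace ℝ (EuclideanSpace ℝ (Fin d)))
    (hF' : F' = AffineSubspace.mk' o
      (Submodule.span ℝ {u - o} ⊔ (F.direction ⊓ (Submodule.span ℝ {pu - o})ᗮ))) :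
    ∀ p ∈ P,
      infDist p (F' : Set (EuclideanSpace ℝ (Fin d))) ^ 2
        ≤ (1 + Δ / δ) * infDist p (F : Set (EuclideanSpace ℝ (Fin d))) ^ 2
          + (Δ / δ + (Δ / δ) ^ 2)
            * ((δ / h) * |⟪p - o, ‖pu - o‖⁻¹ • (pu - o)⟫|) ^ 2 := by
  intro p hp
  haveI : Nonempty F := ⟨⟨o, ho⟩⟩
  have hpuo : (0:ℝ) < ‖pu - o‖ := by
    rw [norm_pos_iff]; exact sub_ne_zero.2 hne
  have hpuo' : ‖pu - o‖ ≠ 0 := ne_of_gt hpuo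
  have hhne : h ≠ 0 := ne_of_gt hhpos
  have hδne : δ ≠ 0 := ne_of_gt hδpos
  set e : EuclideanSpace ℝ (Fin d) := ‖pu - o‖⁻¹ • (pu - o) with he
  set c : ℝ := ⟪p - o, e⟫ with hc
  set p' : EuclideanSpace ℝ (Fin d) := (EuclideanGeometry.orthogonalProjection F p : EuclideanSpace ℝ (Fin d)) with hp'
  have hp'F : p' ∈ F := (EuclideanGeometry.orthogonalProjection F p).2
  have horth : p - p' ∈ F.directionᗮ := by
    have := EuclideanGeometry.vsub_orthogonalProjection_mem_direction_orthogonal F p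
    rwa [vsub_eq_sub] at this
  have hpuo_dir : pu - o ∈ F.direction := by
    have := AffineSubspace.vsub_mem_direction hpu ho
    rwa [vsub_eq_sub] at this
  have he_dir : e ∈ F.direction := Submodule.smul_mem _ _ hpuo_dir
  set w : EuclideanSpace ℝ (Fin d) := (p' - o) - c • e with hw
  have hp'o_dir : p' - o ∈ F.direction := by
    have := AffineSubspace.vsub_mem_direction hp'F ho
    rwa [vsub_eq_sub] at this
  have hw_dir : w ∈ F.direction := Submodule.sub_mem _ hp'o_dir (Submodule.smul_mem _ _ he_dir)
  -- inner products
  have hip : ⟪p' - o, pu - o⟫ = ⟪p - o, pu - o⟫ := by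
    have h0 : ⟪p - p', pu - o⟫ = 0 := by
      rw [real_inner_comm]; exact horth _ hpuo_dir
    have h1 : ⟪(p - o) - (p' - o), pu - o⟫ = (0:ℝ) := by
      have : (p - o) - (p' - o) = p - p' := by abel
      rw [this]; exact h0
    rw [inner_sub_left] at h1
    linarith
  have hepu : ⟪e, pu - o⟫ = ‖pu - o‖ := by
    rw [he, real_inner_smul_left, real_inner_self_eq_norm_sq]
    field_simp
  have hcval : c = ‖pu - o‖⁻¹ * ⟪p - o, pu - o⟫ := by
    rw [hc, he, real_inner_smul_right]
  have hw_perp : ⟪w, pu - o⟫ = 0 := by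
    rw [hw, inner_sub_left, real_inner_smul_left, hepu, hip, hcval]
    field_simp
    ring
  set t : ℝ := c / ‖pu - o‖ with ht
  set q : EuclideanSpace ℝ (Fin d) := (t • (u - o) + w) + o with hq
  have hqF' : q ∈ F' := by
    rw [hF']
    rw [AffineSubspace.mem_mk']
    have : q -ᵥ o = t • (u - o) + w := by
      rw [vsub_eq_sub, hq]; abel
    rw [this]
    exact Submodule.add_mem_sup
      (Submodule.smul_mem _ _ (Submodule.mem_span_singleton_self _))
      ⟨hw_dir, Submodule.mem_orthogonal_singleton_iff_inner_left.2 hw_perp⟩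
  -- p' - q = -t • (u - pu)
  have hkey : p' - q = (-t) • (u - pu) := by
    have h1 : t • ((pu : EuclideanSpace ℝ (Fin d)) - o) = c • e := by
      rw [he, smul_smul, ht, div_eq_mul_inv]
    have h2 : p' - q = c • e - t • (u - o) := by
      rw [hq, hw]; abel
    have h3 : t • ((u : EuclideanSpace ℝ (Fin d)) - o) = t • (u - pu) + t • (pu - o) := by
      rw [← smul_add]
      congr 1
      abel
    rw [h2, h3, h1]
    module
  have hdist_p'q : dist p' q ≤ |c| * (Δ / h) := by
    have hxy : ⟪pu - o, u - pu⟫ = 0 := by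
      rw [real_inner_comm]; exact hproj _ hpuo_dir
    have htan2 : Real.tan (InnerProductGeometry.angle (u - o) (pu - o)) = ‖u - pu‖ / ‖pu - o‖ := by
      have : (u : EuclideanSpace ℝ (Fin d)) - o = (pu - o) + (u - pu) := by abel
      rw [this, InnerProductGeometry.angle_comm,
        InnerProductGeometry.tan_angle_add_of_inner_eq_zero hxy]
    have hupu : ‖u - pu‖ ≤ (Δ / h) * ‖pu - o‖ := by
      rw [htan2] at htan
      rw [div_le_iff₀ hpuo] at htan
      linarith
    have : dist p' q = |t| * ‖u - pu‖ := by
      rw [dist_eq_norm, hkey, norm_smul, norm_neg, Real.norm_eq_abs]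
    rw [this, ht, abs_div, abs_of_pos hpuo]
    rw [div_mul_eq_mul_div, div_le_iff₀ hpuo]
    calc |c| * ‖u - pu‖ ≤ |c| * ((Δ / h) * ‖pu - o‖) := by
          exact mul_le_mul_of_nonneg_left hupu (abs_nonneg c)
      _ = |c| * (Δ / h) * ‖pu - o‖ := by ring
  have hdist_pp' : dist p p' ≤ infDist p (F : Set (EuclideanSpace ℝ (Fin d))) := by
    by_contra hlt
    push_neg at hlt
    rw [infDist_lt_iff ⟨o, ho⟩] at hlt
    obtain ⟨y, hy, hyd⟩ := hlt
    have hle : dist p p' ≤ dist p y := by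
      have hd := EuclideanGeometry.dist_sq_eq_dist_orthogonalProjection_sq_add_dist_orthogonalProjection_sq
        (s := F) p hy
      rw [← hp'] at hd
      nlinarith [dist_nonneg (x := y) (y := p), dist_nonneg (x := p) (y := p'),
        dist_nonneg (x := y) (y := p'), dist_comm y p]
    linarith
  have hmain : infDist p (F' : Set (EuclideanSpace ℝ (Fin d)))
      ≤ infDist p (F : Set (EuclideanSpace ℝ (Fin d))) + |c| * (Δ / h) := by
    calc infDist p (F' : Set (EuclideanSpace ℝ (Fin d))) ≤ dist p q := infDist_le_dist_of_mem hqF'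
      _ ≤ dist p p' + dist p' q := dist_triangle p p' q
      _ ≤ _ := add_le_add hdist_pp' hdist_p'q
  exact delta_rotation_alg_aux _ _ _ _ _ _ infDist_nonneg (abs_nonneg c)
    infDist_nonneg hΔ hδpos hhpos hmain
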